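/- Let T : [−1, 1] → [−1, 1] be the Hemmer map T(x) = 1 − 2√|x|, and let ν be the Borel measure on [−1, 1] with density ρ(x) = (1 − x)/2 with respect to Lebesgue measure. Then T indeed maps [−1, 1] into [−1, 1], ν is a probability measure (ν([−1,1]) = 1), and ν is T-invariant: ν(T^{−1} A) = ν(A) for every Borel set A ⊆ [−1, 1]. -/

import Mathlib

open MeasureTheory Set

noncomputable section

/-- The Hemmer map `T(x) = 1 − 2√|x|` on the interval `[-1, 1]`. -/
def hemmer (x : ℝ) : ℝ := 1 - 2 * Real.sqrt |x|

/-- The measure on `[-1, 1]` with density `ρ(x) = (1 − x)/2` w.r.t. Lebesgue measure. -/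
def hemmerMeasure : Measure ℝ :=
  (volume.restrict (Set.Icc (-1 : ℝ) 1)).withDensity fun x => ENNReal.ofReal ((1 - x) / 2)

lemma hemmer_continuous : Continuous hemmer := by
  unfold hemmer; fun_prop

lemma hemmerMeasure_apply {s : Set ℝ} (hs : MeasurableSet s) :
    hemmerMeasure s = ∫⁻ x in s ∩ Set.Icc (-1 : ℝ) 1, ENNReal.ofReal ((1 - x) / 2) := by
  rw [hemmerMeasure, withDensity_apply _ hs, Measure.restrict_restrict hs]

lemma hemmerMeasure_congr {s t : Set ℝ} (hs : MeasurableSet s) (ht : MeasurableSet t)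
    (h : s ∩ Set.Icc (-1 : ℝ) 1 = t ∩ Set.Icc (-1 : ℝ) 1) :
    hemmerMeasure s = hemmerMeasure t := by
  rw [hemmerMeasure_apply hs, hemmerMeasure_apply ht, h]

lemma hasDerivAt_F (x : ℝ) : HasDerivAt (fun t : ℝ => t / 2 - t ^ 2 / 4) ((1 - x) / 2) x := by
  have h := ((hasDerivAt_id x).div_const 2).sub ((hasDerivAt_pow 2 x).div_const 4)
  refine h.congr_deriv ?_
  simp
  ring

lemma lintegral_density (a b : ℝ) (hab : a ≤ b) (hb : b ≤ 1) :
    ∫⁻ x in Set.Icc a b, ENNReal.ofReal ((1 - x) / 2) =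
      ENNReal.ofReal ((b / 2 - b ^ 2 / 4) - (a / 2 - a ^ 2 / 4)) := by
  have hcont : Continuous fun x : ℝ => (1 - x) / 2 := by fun_prop
  have hint : IntegrableOn (fun x : ℝ => (1 - x) / 2) (Set.Icc a b) :=
    hcont.integrableOn_Icc
  rw [← ofReal_integral_eq_lintegral_ofReal hint]
  · congr 1
    rw [integral_Icc_eq_integral_Ioc, ← intervalIntegral.integral_of_le hab]
    rw [intervalIntegral.integral_eq_sub_of_hasDerivAt (fun x _ => hasDerivAt_F x)
      (hcont.intervalIntegrable a b)]
  · filter_upwards [self_mem_ae_restrict (measurableSet_Icc : MeasurableSet (Set.Icc a b))]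
      with x hx
    have : x ≤ 1 := le_trans hx.2 hb
    simp only [Pi.zero_apply]
    linarith

lemma hemmerMeasure_Icc (a b : ℝ) (ha : -1 ≤ a) (hab : a ≤ b) (hb : b ≤ 1) :
    hemmerMeasure (Set.Icc a b) =
      ENNReal.ofReal ((b / 2 - b ^ 2 / 4) - (a / 2 - a ^ 2 / 4)) := by
  rw [hemmerMeasure_apply measurableSet_Icc]
  have : Set.Icc a b ∩ Set.Icc (-1 : ℝ) 1 = Set.Icc a b := by
    rw [Set.inter_eq_left]
    exact Set.Icc_subset_Icc ha hb
  rw [this, lintegral_density a b hab hb]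

lemma hemmerMeasure_total : hemmerMeasure (Set.Icc (-1 : ℝ) 1) = 1 := by
  rw [hemmerMeasure_Icc (-1) 1 le_rfl (by norm_num) le_rfl]
  norm_num

lemma hemmerMeasure_univ : hemmerMeasure Set.univ = 1 := by
  rw [hemmerMeasure_congr MeasurableSet.univ measurableSet_Icc
    (by rw [Set.univ_inter, Set.inter_self])]
  exact hemmerMeasure_total

instance : IsProbabilityMeasure hemmerMeasure := ⟨hemmerMeasure_univ⟩

lemma hemmer_le_one (x : ℝ) : hemmer x ≤ 1 := by
  have := Real.sqrt_nonneg |x|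
  simp only [hemmer]; linarith

lemma hemmer_mapsTo : Set.MapsTo hemmer (Set.Icc (-1 : ℝ) 1) (Set.Icc (-1 : ℝ) 1) := by
  intro x hx
  have h1 : |x| ≤ 1 := abs_le.mpr ⟨hx.1, hx.2⟩
  have h2 : Real.sqrt |x| ≤ 1 := Real.sqrt_le_one.mpr h1
  exact ⟨by simp only [hemmer]; linarith, hemmer_le_one x⟩

lemma hemmerMeasure_Iic (a : ℝ) (ha : -1 ≤ a) (ha' : a ≤ 1) :
    hemmerMeasure (Set.Iic a) = ENNReal.ofReal (a / 2 - a ^ 2 / 4 + 3 / 4) := by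
  have h : Set.Iic a ∩ Set.Icc (-1 : ℝ) 1 = Set.Icc (-1) a ∩ Set.Icc (-1 : ℝ) 1 := by
    ext x
    simp only [Set.mem_inter_iff, Set.mem_Iic, Set.mem_Icc]
    tauto
  rw [hemmerMeasure_congr measurableSet_Iic measurableSet_Icc h,
    hemmerMeasure_Icc (-1) a le_rfl ha ha']
  norm_num

lemma hemmer_preimage_Iic (a : ℝ) (ha' : a < 1) :
    hemmer ⁻¹' Set.Iic a ∩ Set.Icc (-1 : ℝ) 1 =
      Set.Icc (-1 : ℝ) (-(((1 - a) / 2) ^ 2)) ∪ Set.Icc (((1 - a) / 2) ^ 2) 1 := by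
  have hpos : (0 : ℝ) ≤ (1 - a) / 2 := by linarith
  ext x
  simp only [Set.mem_inter_iff, Set.mem_preimage, Set.mem_Iic, Set.mem_Icc, Set.mem_union,
    hemmer]
  have key : 1 - 2 * Real.sqrt |x| ≤ a ↔ ((1 - a) / 2) ^ 2 ≤ |x| := by
    rw [← Real.le_sqrt hpos (abs_nonneg x)]
    constructor <;> intro h <;> linarith
  rw [key, le_abs]
  have hsq : (0:ℝ) ≤ ((1 - a) / 2) ^ 2 := sq_nonneg _
  constructor
  · rintro ⟨h1 | h1, h2, h3⟩
    · right; exact ⟨h1, h3⟩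
    · left; exact ⟨h2, by linarith⟩
  · rintro (⟨h1, h2⟩ | ⟨h1, h2⟩)
    · exact ⟨Or.inr (by linarith), h1, by linarith⟩
    · exact ⟨Or.inl h1, by linarith, h2⟩

lemma hemmer_map_Iic (a : ℝ) :
    hemmerMeasure (hemmer ⁻¹' Set.Iic a) = hemmerMeasure (Set.Iic a) := by
  have hmp : MeasurableSet (hemmer ⁻¹' Set.Iic a) :=
    hemmer_continuous.measurable measurableSet_Iic
  rcases lt_or_ge a (-1) with h | h
  · -- both zero
    have h1 : hemmer ⁻¹' Set.Iic a ∩ Set.Icc (-1 : ℝ) 1 = ∅ ∩ Set.Icc (-1 : ℝ) 1 := by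
      rw [Set.empty_inter]
      apply Set.eq_empty_iff_forall_notMem.mpr
      rintro x ⟨hle, hx⟩
      have := (hemmer_mapsTo hx).1
      simp only [Set.mem_preimage, Set.mem_Iic] at hle
      linarith
    have h2 : Set.Iic a ∩ Set.Icc (-1 : ℝ) 1 = ∅ ∩ Set.Icc (-1 : ℝ) 1 := by
      rw [Set.empty_inter]
      apply Set.eq_empty_iff_forall_notMem.mpr
      rintro x ⟨hle, hx1, hx2⟩
      simp only [Set.mem_Iic] at hle
      linarith
    rw [hemmerMeasure_congr hmp MeasurableSet.empty h1,
      hemmerMeasure_congr measurableSet_Iic MeasurableSet.empty h2]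
  rcases le_or_gt 1 a with h1 | h1
  · -- both equal ν(Icc)
    have e1 : hemmer ⁻¹' Set.Iic a ∩ Set.Icc (-1 : ℝ) 1
        = Set.Icc (-1 : ℝ) 1 ∩ Set.Icc (-1 : ℝ) 1 := by
      rw [Set.inter_self, Set.inter_eq_right]
      intro x hx
      exact le_trans (hemmer_le_one x) h1
    have e2 : Set.Iic a ∩ Set.Icc (-1 : ℝ) 1 = Set.Icc (-1 : ℝ) 1 ∩ Set.Icc (-1 : ℝ) 1 := by
      rw [Set.inter_self, Set.inter_eq_right]
      intro x hx
      exact le_trans hx.2 h1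
    rw [hemmerMeasure_congr hmp measurableSet_Icc e1,
      hemmerMeasure_congr measurableSet_Iic measurableSet_Icc e2]
  · -- main case: -1 ≤ a < 1
    set c : ℝ := ((1 - a) / 2) ^ 2 with hc
    have hc0 : 0 < c := by
      have h2 : 0 < (1 - a) / 2 := by linarith
      rw [hc]; positivity
    have hc1 : c ≤ 1 := by
      have h2 : (1 - a) / 2 ≤ 1 := by linarith
      have h3 : (0:ℝ) ≤ (1 - a) / 2 := by linarith
      nlinarith
    have hU : hemmer ⁻¹' Set.Iic a ∩ Set.Icc (-1 : ℝ) 1 =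
        (Set.Icc (-1 : ℝ) (-c) ∪ Set.Icc c 1) ∩ Set.Icc (-1 : ℝ) 1 := by
      rw [hemmer_preimage_Iic a h1, ← hc]
      symm
      rw [Set.inter_eq_left]
      apply Set.union_subset
      · exact Set.Icc_subset_Icc le_rfl (by linarith)
      · exact Set.Icc_subset_Icc (by linarith) le_rfl
    rw [hemmerMeasure_congr hmp (measurableSet_Icc.union measurableSet_Icc) hU]
    have hdisj : Disjoint (Set.Icc (-1 : ℝ) (-c)) (Set.Icc c 1) := by
      apply Set.disjoint_left.mpr
      intro x hx hx'
      have := hx.2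
      have := hx'.1
      linarith
    rw [measure_union hdisj measurableSet_Icc,
      hemmerMeasure_Icc (-1) (-c) le_rfl (by linarith) (by linarith),
      hemmerMeasure_Icc c 1 (by linarith) hc1 le_rfl,
      hemmerMeasure_Iic a h h1.le]
    rw [← ENNReal.ofReal_add (by nlinarith) (by nlinarith)]
    congr 1
    rw [hc]
    ring

lemma hemmer_map_eq : Measure.map hemmer hemmerMeasure = hemmerMeasure := by
  apply MeasureTheory.Measure.ext_of_Iic
  intro a
  rw [Measure.map_apply hemmer_continuous.measurable measurableSet_Iic]
  exact hemmer_map_Iic a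

/-- The Hemmer map `T(x) = 1 − 2√|x|` maps `[-1,1]` into itself, the
measure `ν` with density `(1 − x)/2` is a probability measure on `[-1,1]`, and `ν` is
`T`-invariant: `ν(T⁻¹A) = ν(A)` for every Borel `A ⊆ [-1,1]`. -/
theorem statement_12 :
    Set.MapsTo hemmer (Set.Icc (-1 : ℝ) 1) (Set.Icc (-1 : ℝ) 1) ∧
    hemmerMeasure (Set.Icc (-1 : ℝ) 1) = 1 ∧
    ∀ A : Set ℝ, A ⊆ Set.Icc (-1 : ℝ) 1 → MeasurableSet A →
      hemmerMeasure (hemmer ⁻¹' A) = hemmerMeasure A := by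
  refine ⟨hemmer_mapsTo, hemmerMeasure_total, fun A _ hA => ?_⟩
  rw [← Measure.map_apply hemmer_continuous.measurable hA, hemmer_map_eq]
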